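/- Let Q_X and Q_Y be primitive strings with |Q_X| ≤ |Q_Y| such that |Q_Y| is not a multiple of |Q_X|. Then for every integer j with 1 ≤ j ≤ |Q_X|, hd(Q_Y·Q_Y, rot^j(Q_X)^∞[1..2|Q_Y|]) ≥ 1, and consequently for every integer m ≥ 1, hd(Q_Y^∞[1..m], Q_X^∞[1..m]) ≥ ⌊m/(2|Q_Y|)⌋. -/

import Mathlib

variable {α : Type*}

/-- Hamming distance: the number of positions at which two (equal-length) strings differ. -/
def hamDist [DecidableEq α] (S T : List α) : ℕ :=
  ((S.zip T).filter fun c => decide (c.1 ≠ c.2)).length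

/-- 1-based substring `T[i..j]` (inclusive). -/
def substr (T : List α) (i j : ℕ) : List α := (T.drop (i - 1)).take (j - i + 1)

/-- `Q^m`: the concatenation of `m` copies of `Q`. -/
def listPow (Q : List α) (m : ℕ) : List α := (List.replicate m Q).flatten

/-- `Q^∞[a..b]`: the segment from position `a` through `b` (1-based) of the infinite
periodic string `Q^∞` with `Q^∞[i] = Q[((i−1) mod |Q|) + 1]`. -/
def infSeg (Q : List α) (a b : ℕ) : List α := substr (listPow Q b) a b

/-- A nonempty string is primitive if it is not a power of a strictly shorter string,
i.e. it equals `R^m` only for `m = 1`. -/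
def PrimitiveStr (Q : List α) : Prop :=
  Q ≠ [] ∧ ∀ (R : List α) (m : ℕ), Q = listPow R m → m = 1

/-- The forward cyclic rotation `rot(S) = S[m]·S[1..m−1]`. -/
def rot (S : List α) : List α := S.rotate (S.length - 1)

/-- `p` is a `k`-mismatch period of `T`: `1 ≤ p ≤ |T|` and
`hd(T[1..n−p+1], T[p..n]) ≤ k`. -/
def IsMismatchPeriod [DecidableEq α] (k p : ℕ) (T : List α) : Prop :=
  1 ≤ p ∧ p ≤ T.length ∧
    hamDist (substr T 1 (T.length - p + 1)) (substr T p T.length) ≤ k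

/-! ### auxiliary -/

def cyc (Q : List α) (i : ℕ) : Option α := Q[i % Q.length]?

lemma cyc_congr {Q : List α} {i j : ℕ} (h : i % Q.length = j % Q.length) :
    cyc Q i = cyc Q j := by simp [cyc, h]

lemma length_listPow (Q : List α) (m : ℕ) : (listPow Q m).length = m * Q.length := by
  simp [listPow, List.length_flatten, Nat.mul_comm]

lemma getElem?_listPow (Q : List α) (m i : ℕ) (h : i < m * Q.length) :
    (listPow Q m)[i]? = cyc Q i := by
  induction m generalizing i with
  | zero => omega
  | succ m ih =>
    have hsm : (m + 1) * Q.length = m * Q.length + Q.length := Nat.succ_mul m Q.length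
    have hflat : listPow Q (m + 1) = Q ++ listPow Q m := by
      simp [listPow, List.replicate_succ]
    rw [hflat, List.getElem?_append]
    by_cases hi : i < Q.length
    · simp [hi, cyc, Nat.mod_eq_of_lt hi]
    · push_neg at hi
      rw [if_neg (by omega), ih _ (by omega)]
      exact cyc_congr (Nat.mod_eq_sub_mod hi).symm

lemma length_infSeg (Q : List α) (hQ : Q ≠ []) (b : ℕ) : (infSeg Q 1 b).length = b := by
  have h1 : 1 ≤ Q.length := List.length_pos_iff.mpr hQ
  have : b ≤ b * Q.length := Nat.le_mul_of_pos_right b h1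
  simp only [infSeg, substr, List.length_take, List.length_drop, length_listPow,
    Nat.sub_self, Nat.sub_zero]
  rcases Nat.eq_zero_or_pos b with rfl | hb
  · simp
  · rw [Nat.sub_add_cancel hb]
    exact min_eq_left this

lemma getElem?_infSeg (Q : List α) (b i : ℕ) (hi : i < b) :
    (infSeg Q 1 b)[i]? = cyc Q i := by
  by_cases hQ : Q = []
  · subst hQ; simp [infSeg, substr, listPow, cyc]
  · have h1 : 1 ≤ Q.length := List.length_pos_iff.mpr hQ
    show (((listPow Q b).drop (1 - 1)).take (b - 1 + 1))[i]? = cyc Q i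
    rw [Nat.sub_self, List.drop_zero, List.getElem?_take, if_pos (by omega)]
    exact getElem?_listPow Q b i (lt_of_lt_of_le hi (Nat.le_mul_of_pos_right b h1))

lemma hamDist_cons [DecidableEq α] (a b : α) (S T : List α) :
    hamDist (a :: S) (b :: T) = (if a = b then 0 else 1) + hamDist S T := by
  by_cases hab : a = b <;> simp [hamDist, hab, Nat.add_comm]

lemma hamDist_eq_card [DecidableEq α] (S T : List α) (h : S.length = T.length) :
    hamDist S T = ((Finset.range S.length).filter fun i => S[i]? ≠ T[i]?).card := by
  induction S generalizing T with
  | nil =>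
    cases T with
    | nil => simp [hamDist]
    | cons b T => simp at h
  | cons a S ih =>
    cases T with
    | nil => simp at h
    | cons b T =>
      rw [hamDist_cons, ih T (by simpa using h), Finset.card_filter, Finset.card_filter,
        List.length_cons, Finset.sum_range_succ']
      simp only [List.getElem?_cons_succ, List.getElem?_cons_zero, ne_eq, Option.some.injEq]
      rw [Nat.add_comm]
      congr 1
      by_cases hab : a = b <;> simp [hab]

lemma one_le_hamDist [DecidableEq α] {S T : List α} (h : S.length = T.length) {i : ℕ}
    (hi : i < S.length) (hne : S[i]? ≠ T[i]?) : 1 ≤ hamDist S T := by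
  rw [hamDist_eq_card S T h]
  refine Finset.card_pos.mpr ⟨i, ?_⟩
  simp only [Finset.mem_filter, Finset.mem_range]
  exact ⟨hi, hne⟩

/-! ### periods -/

def Per {β : Type*} (f : ℕ → β) (p : ℕ) : Prop := ∀ i, f (i + p) = f i

lemma Per.add_mul {β : Type*} {f : ℕ → β} {p : ℕ} (hf : Per f p) (i k : ℕ) :
    f (i + k * p) = f i := by
  induction k with
  | zero => simp
  | succ k ih =>
    have : i + (k + 1) * p = i + k * p + p := by rw [Nat.succ_mul]; omega
    rw [this, hf (i + k * p), ih]

lemma Per.congr {β : Type*} {f : ℕ → β} {p : ℕ} (hf : Per f p) {i j : ℕ}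
    (h : i % p = j % p) : f i = f j := by
  have hi : f i = f (i % p) := by
    conv_lhs => rw [← Nat.mod_add_div' i p]
    exact hf.add_mul _ _
  have hj : f j = f (j % p) := by
    conv_lhs => rw [← Nat.mod_add_div' j p]
    exact hf.add_mul _ _
  rw [hi, hj, h]

lemma Per.mod {β : Type*} {f : ℕ → β} {a b : ℕ} (ha : Per f a) (hb : Per f b) :
    Per f (a % b) := by
  intro i
  have h1 : i + a % b + a / b * b = i + a := by rw [Nat.add_assoc, Nat.mod_add_div']
  calc f (i + a % b) = f (i + a % b + a / b * b) := (hb.add_mul _ _).symm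
    _ = f (i + a) := by rw [h1]
    _ = f i := ha i

lemma Per.gcd {β : Type*} {f : ℕ → β} :
    ∀ a b, Per f a → Per f b → Per f (Nat.gcd a b) := by
  intro a
  induction a using Nat.strong_induction_on with
  | _ a ih =>
    intro b ha hb
    match a, ha with
    | 0, _ => simpa using hb
    | (a + 1), ha =>
      rw [Nat.gcd_rec]
      exact ih (b % (a + 1)) (Nat.mod_lt b (Nat.succ_pos a)) (a + 1) (hb.mod ha) ha

lemma per_cyc (Q : List α) : Per (cyc Q) Q.length :=
  fun i => cyc_congr (Nat.add_mod_right i Q.length)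

lemma eq_listPow_of_per {Q : List α} {g : ℕ} (hg : 0 < g) (hdvd : g ∣ Q.length)
    (hper : Per (cyc Q) g) : Q = listPow (Q.take g) (Q.length / g) := by
  rcases eq_or_ne Q [] with rfl | hQ
  · simp [listPow]
  · have hn : 0 < Q.length := List.length_pos_iff.mpr hQ
    have hgle : g ≤ Q.length := Nat.le_of_dvd hn hdvd
    have htl : (Q.take g).length = g := by simp [hgle]
    have hlen : (listPow (Q.take g) (Q.length / g)).length = Q.length := by
      rw [length_listPow, htl, Nat.div_mul_cancel hdvd]
    apply List.ext_getElem?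
    intro i
    by_cases hi : i < Q.length
    · rw [getElem?_listPow _ _ _ (by rw [htl, Nat.div_mul_cancel hdvd]; exact hi)]
      have hig : i % g < g := Nat.mod_lt _ hg
      have e1 : cyc (Q.take g) i = Q[i % g]? := by
        rw [cyc, htl, List.getElem?_take, if_pos (Nat.mod_lt _ hg)]
      have e2 : Q[i % g]? = cyc Q (i % g) := by
        rw [cyc, Nat.mod_eq_of_lt (lt_of_lt_of_le hig hgle)]
      have e3 : cyc Q (i % g) = cyc Q i := hper.congr (Nat.mod_mod_of_dvd i (dvd_refl g))
      rw [e1, e2, e3, cyc, Nat.mod_eq_of_lt hi]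
    · rw [List.getElem?_eq_none (by omega), List.getElem?_eq_none (by omega)]

/-! ### rotation -/

lemma cyc_rotate (S : List α) (k i : ℕ) : cyc (S.rotate k) i = cyc S (i + k) := by
  rcases eq_or_ne S [] with rfl | hS
  · simp [cyc]
  · have hl : 0 < S.length := List.length_pos_iff.mpr hS
    have hlr : (S.rotate k).length = S.length := List.length_rotate S k
    have hidx : (i % S.length + k) % S.length = (i + k) % S.length :=
      Nat.ModEq.add_right k (Nat.mod_mod_of_dvd i (dvd_refl S.length))
    rw [cyc, cyc, hlr, List.getElem?_rotate (Nat.mod_lt _ hl), hidx]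

lemma rot_iter_eq_rotate (S : List α) (j : ℕ) :
    rot^[j] S = S.rotate (j * (S.length - 1)) := by
  induction j with
  | zero => simp
  | succ j ih =>
    rw [Function.iterate_succ_apply', ih, rot, List.length_rotate, List.rotate_rotate,
      Nat.succ_mul]

/-! ### key lemma -/

lemma key_mismatch [DecidableEq α] (QX QY : List α) (hQX : PrimitiveStr QX)
    (hle : QX.length ≤ QY.length) (hnd : ¬ QX.length ∣ QY.length) (t : ℕ) :
    ∃ i, i < 2 * QY.length ∧ cyc QY i ≠ cyc QX (i + t) := by
  have hNx0 : 0 < QX.length := List.length_pos_iff.mpr hQX.1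
  have hNy0 : 0 < QY.length := lt_of_lt_of_le hNx0 hle
  set Nx := QX.length with hNxd
  set Ny := QY.length with hNyd
  by_contra hcon
  push_neg at hcon
  set f : ℕ → Option α := fun i => cyc QX (i + t) with hf
  have hperQX : Per (cyc QX) Nx := per_cyc QX
  have hfNx : Per f Nx := by
    intro i
    show cyc QX (i + Nx + t) = cyc QX (i + t)
    rw [show i + Nx + t = (i + t) + Nx by omega]
    exact hperQX (i + t)
  have hNyper : ∀ i < Ny, f (i + Ny) = f i := by
    intro i hi
    have h1 := hcon (i + Ny) (by omega)
    have h2 := hcon i (by omega)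
    have h3 : cyc QY (i + Ny) = cyc QY i := per_cyc QY i
    show cyc QX (i + Ny + t) = cyc QX (i + t)
    rw [← h1, h3, h2]
  set r := Ny % Nx with hr
  have hr0 : 0 < r := Nat.pos_of_ne_zero fun h => hnd (Nat.dvd_of_mod_eq_zero h)
  have hrNx : r < Nx := Nat.mod_lt _ hNx0
  have hfr : Per f r := by
    intro i
    set i0 := i % Nx with hi0
    have hi0lt : i0 < Nx := Nat.mod_lt _ hNx0
    have hmm : i0 % Nx = i % Nx := Nat.mod_mod_of_dvd i (dvd_refl Nx)
    have e1 : f (i + r) = f (i0 + r) :=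
      hfNx.congr (Nat.ModEq.add_right r hmm.symm)
    have e2 : f (i0 + r) = f (i0 + Ny) :=
      hfNx.congr (Nat.ModEq.add_left i0 (Nat.mod_mod_of_dvd Ny (dvd_refl Nx)))
    have e3 : f (i0 + Ny) = f i0 := hNyper i0 (lt_of_lt_of_le hi0lt hle)
    have e4 : f i0 = f i := hfNx.congr hmm
    rw [e1, e2, e3, e4]
  have hgcd : Per f (Nat.gcd Nx Ny) := by
    rw [Nat.gcd_rec]
    exact Per.gcd _ _ hfr hfNx
  set g := Nat.gcd Nx Ny with hgdef
  have hgdvd : g ∣ Nx := Nat.gcd_dvd_left _ _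
  have hg0 : 0 < g := Nat.gcd_pos_of_pos_left _ hNx0
  have hglt : g < Nx :=
    lt_of_le_of_ne (Nat.le_of_dvd hNx0 hgdvd)
      (fun h => hnd (h ▸ Nat.gcd_dvd_right Nx Ny))
  have hperg : Per (cyc QX) g := by
    intro i
    have htle : t ≤ t * Nx := Nat.le_mul_of_pos_right t hNx0
    have h4 := hgcd (i + t * Nx - t)
    have h4' : cyc QX (i + t * Nx - t + g + t) = cyc QX (i + t * Nx - t + t) := h4
    calc cyc QX (i + g) = cyc QX (i + g + t * Nx) := (hperQX.add_mul _ t).symm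
      _ = cyc QX (i + t * Nx - t + g + t) := by rw [show i + g + t * Nx = i + t * Nx - t + g + t by omega]
      _ = cyc QX (i + t * Nx - t + t) := h4'
      _ = cyc QX (i + t * Nx) := by rw [show i + t * Nx - t + t = i + t * Nx by omega]
      _ = cyc QX i := hperQX.add_mul i t
  have hpow := eq_listPow_of_per hg0 hgdvd hperg
  have h1 := hQX.2 _ _ hpow
  have h2 : Nx / g * g = Nx := Nat.div_mul_cancel hgdvd
  rw [h1] at h2
  omega


/-- if `Q_X`, `Q_Y` are primitive, `|Q_X| ≤ |Q_Y|` and `|Q_Y|` is not a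
multiple of `|Q_X|`, then for every `1 ≤ j ≤ |Q_X|`,
`hd(Q_Y·Q_Y, rot^j(Q_X)^∞[1..2|Q_Y|]) ≥ 1`, and for every `m ≥ 1`,
`hd(Q_Y^∞[1..m], Q_X^∞[1..m]) ≥ ⌊m/(2|Q_Y|)⌋`. -/
theorem prim_nonmultiple_mismatch [DecidableEq α] (QX QY : List α)
    (hQX : PrimitiveStr QX) (hQY : PrimitiveStr QY)
    (hle : QX.length ≤ QY.length) (hnd : ¬ QX.length ∣ QY.length) :
    (∀ j : ℕ, 1 ≤ j → j ≤ QX.length →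
      1 ≤ hamDist (QY ++ QY) (infSeg (rot^[j] QX) 1 (2 * QY.length))) ∧
      ∀ m : ℕ, 1 ≤ m →
        m / (2 * QY.length) ≤ hamDist (infSeg QY 1 m) (infSeg QX 1 m) := by
  have hNx0 : 0 < QX.length := List.length_pos_iff.mpr hQX.1
  have hNy0 : 0 < QY.length := lt_of_lt_of_le hNx0 hle
  have hQYne : QY ≠ [] := hQY.1
  constructor
  · intro j hj1 hj2
    set P : List α := rot^[j] QX with hP
    have hProt : P = QX.rotate (j * (QX.length - 1)) := rot_iter_eq_rotate QX j
    have hPlen : P.length = QX.length := by rw [hProt, List.length_rotate]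
    have hPne : P ≠ [] := by
      intro h; rw [h] at hPlen; simp at hPlen; omega
    obtain ⟨i, hi, hne⟩ := key_mismatch QX QY hQX hle hnd (j * (QX.length - 1))
    have hSlen : (QY ++ QY).length = 2 * QY.length := by simp; omega
    have hTlen : (infSeg P 1 (2 * QY.length)).length = 2 * QY.length :=
      length_infSeg P hPne _
    have hS : (QY ++ QY)[i]? = cyc QY i := by
      have h2 : QY ++ QY = listPow QY 2 := by simp [listPow]
      rw [h2]; exact getElem?_listPow QY 2 i (by omega)
    have hT : (infSeg P 1 (2 * QY.length))[i]? = cyc QX (i + j * (QX.length - 1)) := by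
      rw [getElem?_infSeg P _ i hi, hProt, cyc_rotate]
    exact one_le_hamDist (by omega) (by omega : i < (QY ++ QY).length)
      (by rw [hS, hT]; exact hne)
  · intro m _
    set B := 2 * QY.length with hB
    have hB0 : 0 < B := by omega
    have hSlen : (infSeg QY 1 m).length = m := length_infSeg QY hQYne m
    have hTlen : (infSeg QX 1 m).length = m := length_infSeg QX hQX.1 m
    rw [hamDist_eq_card _ _ (by omega), hSlen]
    have hfilt : ((Finset.range m).filter
          fun i => (infSeg QY 1 m)[i]? ≠ (infSeg QX 1 m)[i]?) =
        ((Finset.range m).filter fun i => cyc QY i ≠ cyc QX i) := by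
      apply Finset.filter_congr
      intro i hi
      rw [Finset.mem_range] at hi
      rw [getElem?_infSeg QY m i hi, getElem?_infSeg QX m i hi]
    rw [hfilt]
    have hwit : ∀ kk : ℕ, ∃ p, B * kk ≤ p ∧ p < B * (kk + 1) ∧ cyc QY p ≠ cyc QX p := by
      intro kk
      obtain ⟨i, hi, hne⟩ := key_mismatch QX QY hQX hle hnd (B * kk)
      refine ⟨B * kk + i, by omega, by rw [Nat.mul_add]; omega, ?_⟩
      have e1 : cyc QY (B * kk + i) = cyc QY i := by
        apply cyc_congr
        rw [show B * kk + i = i + QY.length * (2 * kk) by rw [hB]; ring]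
        exact Nat.add_mul_mod_self_left i QY.length (2 * kk)
      have e2 : cyc QX (B * kk + i) = cyc QX (i + B * kk) := by rw [Nat.add_comm]
      rw [e1, e2]; exact hne
    choose p hp1 hp2 hp3 using hwit
    calc m / B = (Finset.range (m / B)).card := (Finset.card_range _).symm
      _ ≤ ((Finset.range m).filter fun i => cyc QY i ≠ cyc QX i).card := by
          apply Finset.card_le_card_of_injOn p
          · intro kk hkk
            rw [Finset.mem_coe, Finset.mem_range] at hkk
            rw [Finset.mem_coe, Finset.mem_filter, Finset.mem_range]
            refine ⟨?_, hp3 kk⟩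
            have h1 : B * (kk + 1) ≤ B * (m / B) :=
              Nat.mul_le_mul_left B (by omega)
            have h2 : B * (m / B) ≤ m := Nat.mul_div_le m B
            have := hp2 kk
            omega
          · intro k1 _ k2 _ hpe
            have d1 : p k1 / B = k1 :=
              Nat.div_eq_of_lt_le (by rw [Nat.mul_comm]; exact hp1 k1)
                (by rw [Nat.mul_comm]; exact hp2 k1)
            have d2 : p k2 / B = k2 :=
              Nat.div_eq_of_lt_le (by rw [Nat.mul_comm]; exact hp1 k2)
                (by rw [Nat.mul_comm]; exact hp2 k2)
            rw [← d1, ← d2, hpe]
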